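/- Let H = (ℂ*)^k act diagonally on ℂⁿ via characters, and let f₀, …, f_m ∈ ℂ[z₁, …, zₙ] be polynomials with no nontrivial common divisor such that every ratio f_i/f_j is an H-invariant rational function (f_i(h·x) f_j(x) = f_j(h·x) f_i(x) for all h, x). Then there exists a character χ : H → ℂ* such that f_i(h·x) = χ(h) f_i(x) for every i and all (h, x) ∈ H × ℂⁿ. -/

import Mathlib

open MvPolynomial

/-- The character of the torus `H = (ℂ*)ᵏ` with exponent vector `c`. -/
noncomputable def torusChar {k : ℕ} (c : Fin k → ℤ) (h : Fin k → ℂˣ) : ℂ :=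
  ((∏ j, h j ^ c j : ℂˣ) : ℂ)

/-- The diagonal action of `H = (ℂ*)ᵏ` on `ℂⁿ` with weight matrix `A`. -/
noncomputable def torusAct {n k : ℕ} (A : Fin n → Fin k → ℤ)
    (h : Fin k → ℂˣ) (x : Fin n → ℂ) : Fin n → ℂ :=
  fun i => torusChar (A i) h * x i

namespace TorusAux

variable {n k : ℕ}

lemma zpow_sum' {ι : Type*} (g : ℂˣ) (s : Finset ι) (c : ι → ℤ) :
    g ^ (∑ i ∈ s, c i) = ∏ i ∈ s, g ^ c i := by
  classical
  induction s using Finset.induction_on with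
  | empty => simp
  | insert a s' hne ih => rw [Finset.sum_insert hne, Finset.prod_insert hne, zpow_add, ih]

lemma torusChar_ne_zero (c : Fin k → ℤ) (h : Fin k → ℂˣ) : torusChar c h ≠ 0 :=
  Units.ne_zero _

lemma torusChar_inv_mul (c : Fin k → ℤ) (h : Fin k → ℂˣ) :
    torusChar c (fun j => (h j)⁻¹) * torusChar c h = 1 := by
  unfold torusChar
  rw [← Units.val_mul, ← Finset.prod_mul_distrib]
  norm_cast
  rw [Finset.prod_congr rfl (fun j _ => by rw [inv_zpow, inv_mul_cancel])]
  simp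

/-- The weight of a monomial exponent vector. -/
def wt (A : Fin n → Fin k → ℤ) (d : Fin n →₀ ℕ) : Fin k → ℤ :=
  fun j => ∑ i, (d i : ℤ) * A i j

lemma torusChar_wt (A : Fin n → Fin k → ℤ) (d : Fin n →₀ ℕ) (h : Fin k → ℂˣ) :
    torusChar (wt A d) h = ∏ i, torusChar (A i) h ^ d i := by
  have key : (∏ j, h j ^ (wt A d j) : ℂˣ) = ∏ i, (∏ j, h j ^ A i j : ℂˣ) ^ (d i) := by
    unfold wt
    calc (∏ j, h j ^ (∑ i, (d i : ℤ) * A i j) : ℂˣ)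
        = ∏ j, ∏ i, (h j ^ A i j) ^ (d i : ℕ) := by
          refine Finset.prod_congr rfl fun j _ => ?_
          rw [zpow_sum']
          refine Finset.prod_congr rfl fun i _ => ?_
          rw [mul_comm, zpow_mul, zpow_natCast]
      _ = ∏ i, (∏ j, h j ^ A i j) ^ (d i) := by
          rw [Finset.prod_comm]
          exact Finset.prod_congr rfl fun i _ => (Finset.prod_pow _ _ _)
  calc torusChar (wt A d) h
      = (Units.coeHom ℂ) (∏ i, (∏ j, h j ^ A i j : ℂˣ) ^ d i) := congrArg _ key
    _ = ∏ i, torusChar (A i) h ^ d i := by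
        rw [map_prod]
        exact Finset.prod_congr rfl fun i _ => by rw [map_pow]; rfl

/-- The twist of a polynomial by an element of the torus. -/
noncomputable def tw (A : Fin n → Fin k → ℤ) (h : Fin k → ℂˣ) :
    MvPolynomial (Fin n) ℂ →ₐ[ℂ] MvPolynomial (Fin n) ℂ :=
  bind₁ (fun i => C (torusChar (A i) h) * X i)

lemma eval_tw (A : Fin n → Fin k → ℤ) (h : Fin k → ℂˣ) (x : Fin n → ℂ)
    (f : MvPolynomial (Fin n) ℂ) :
    eval x (tw A h f) = eval (torusAct A h x) f := by
  induction f using MvPolynomial.induction_on with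
  | C a => simp [tw]
  | add p q hp hq => simp [map_add, hp, hq]
  | mul_X p i hp =>
    have hx : tw A h (X i) = C (torusChar (A i) h) * X i := bind₁_X_right _ i
    rw [map_mul, hx, eval_mul, eval_mul, hp]
    simp [torusAct]

lemma tw_monomial (A : Fin n → Fin k → ℤ) (h : Fin k → ℂˣ) (d : Fin n →₀ ℕ) (r : ℂ) :
    tw A h (monomial d r) = monomial d (torusChar (wt A d) h * r) := by
  rw [tw, bind₁_monomial]
  have step : ∀ i ∈ d.support, (C (torusChar (A i) h) * X i) ^ d i
      = C (torusChar (A i) h ^ d i) * X i ^ d i := by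
    intro i _; rw [mul_pow, C_pow]
  rw [Finset.prod_congr rfl step, Finset.prod_mul_distrib, ← map_prod]
  have hfull : ∏ i ∈ d.support, torusChar (A i) h ^ d i = ∏ i, torusChar (A i) h ^ d i := by
    apply Finset.prod_subset (Finset.subset_univ _)
    intro i _ hi
    rw [Finsupp.notMem_support_iff.mp hi, pow_zero]
  rw [hfull, ← torusChar_wt, monomial_eq]
  rw [Finsupp.prod, ← mul_assoc, ← C_mul, mul_comm r (torusChar (wt A d) h)]

lemma coeff_tw (A : Fin n → Fin k → ℤ) (h : Fin k → ℂˣ) (f : MvPolynomial (Fin n) ℂ)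
    (d : Fin n →₀ ℕ) :
    coeff d (tw A h f) = torusChar (wt A d) h * coeff d f := by
  classical
  induction f using MvPolynomial.induction_on' with
  | monomial e r =>
    rw [tw_monomial, coeff_monomial, coeff_monomial]
    split
    · next he => subst he; rfl
    · rw [mul_zero]
  | add p q hp hq => rw [map_add, coeff_add, coeff_add, hp, hq, mul_add]

lemma tw_tw (A : Fin n → Fin k → ℤ) (h : Fin k → ℂˣ) (f : MvPolynomial (Fin n) ℂ) :
    tw A h (tw A (fun j => (h j)⁻¹) f) = f := by
  rw [tw, tw, bind₁_bind₁]
  have : (fun i => bind₁ (fun i => C (torusChar (A i) h) * X i)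
      (C (torusChar (A i) (fun j => (h j)⁻¹)) * X i)) = (X : Fin n → MvPolynomial (Fin n) ℂ) := by
    funext i
    rw [map_mul, algHom_C, bind₁_X_right, ← mul_assoc, MvPolynomial.algebraMap_eq, ← C_mul,
      torusChar_inv_mul, C_1, one_mul]
  rw [this, bind₁_X_left]
  rfl

lemma isUnit_eq_C : ∀ {n : ℕ} (q : MvPolynomial (Fin n) ℂ), IsUnit q → ∃ c : ℂ, q = C c := by
  intro n
  induction n with
  | zero => exact fun q _ => ⟨q.coeff 0, eq_C_of_isEmpty q⟩
  | succ n ih =>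
    intro q hq
    have h1 : IsUnit (finSuccEquiv ℂ n q) := hq.map _
    obtain ⟨r, hr, hCr⟩ := Polynomial.isUnit_iff.mp h1
    obtain ⟨c, rfl⟩ := ih r hr
    refine ⟨c, (finSuccEquiv ℂ n).injective ?_⟩
    rw [← hCr]
    simp [finSuccEquiv_apply]

end TorusAux

open TorusAux

/-- If `f₀, …, f_m` have no nontrivial common divisor and all ratios `f_i/f_j`
are invariant under the diagonal torus action, then there is a character `χ`
such that `f_i(h·x) = χ(h) f_i(x)` for all `i`, `h` and `x`. -/
theorem common_character_of_semiinvariants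
    {n k m : ℕ} (A : Fin n → Fin k → ℤ)
    (f : Fin (m + 1) → MvPolynomial (Fin n) ℂ)
    (hgcd : ∀ d : MvPolynomial (Fin n) ℂ, (∀ i, d ∣ f i) → IsUnit d)
    (hratio : ∀ (i j : Fin (m + 1)) (h : Fin k → ℂˣ) (x : Fin n → ℂ),
      eval (torusAct A h x) (f i) * eval x (f j) =
        eval (torusAct A h x) (f j) * eval x (f i)) :
    ∃ c : Fin k → ℤ, ∀ (i : Fin (m + 1)) (h : Fin k → ℂˣ) (x : Fin n → ℂ),
      eval (torusAct A h x) (f i) = torusChar c h * eval x (f i) := by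
  classical
  letI : GCDMonoid (MvPolynomial (Fin n) ℂ) := UniqueFactorizationMonoid.toGCDMonoid _
  have key : ∀ (i j : Fin (m+1)) (h : Fin k → ℂˣ),
      tw A h (f i) * f j = tw A h (f j) * f i := by
    intro i j h
    apply MvPolynomial.funext
    intro x
    rw [eval_mul, eval_mul, eval_tw, eval_tw]
    exact hratio i j h x
  have hdvd : ∀ (i : Fin (m+1)) (h : Fin k → ℂˣ), f i ≠ 0 → f i ∣ tw A h (f i) := by
    intro i h hfi
    obtain ⟨a, ha⟩ := gcd_dvd_left (f i) (tw A h (f i))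
    obtain ⟨b, hb⟩ := gcd_dvd_right (f i) (tw A h (f i))
    set g := gcd (f i) (tw A h (f i)) with hg
    have hg0 : g ≠ 0 := fun h0 => hfi (by rw [ha, h0, zero_mul])
    have hrel : IsRelPrime a b := by
      intro e hea heb
      obtain ⟨t, ht⟩ : g * e ∣ g := by
        apply dvd_gcd
        · obtain ⟨u, hu⟩ := hea; exact ⟨u, by rw [ha, hu]; ring⟩
        · obtain ⟨u, hu⟩ := heb; exact ⟨u, by rw [hb, hu]; ring⟩
      have h1 : 1 = e * t := mul_left_cancel₀ hg0 (by rw [← mul_assoc, ← ht, mul_one])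
      exact IsUnit.of_mul_eq_one (a := e) t h1.symm
    have haunit : IsUnit a := by
      apply hgcd
      intro j
      have hj : b * f j = tw A h (f j) * a := by
        have hk := key i j h
        rw [hb, ha] at hk
        apply mul_left_cancel₀ hg0
        calc g * (b * f j) = g * b * f j := by ring
          _ = tw A h (f j) * (g * a) := hk
          _ = g * (tw A h (f j) * a) := by ring
      exact hrel.dvd_of_dvd_mul_left ⟨tw A h (f j), by rw [hj]; ring⟩
    obtain ⟨u, hu⟩ := haunit
    refine ⟨↑u⁻¹ * b, ?_⟩
    rw [hb, ha, ← hu, mul_assoc, ← mul_assoc (u : MvPolynomial (Fin n) ℂ), Units.mul_inv, one_mul]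
  have hconst : ∀ (i : Fin (m+1)) (h : Fin k → ℂˣ), f i ≠ 0 →
      ∃ c : ℂ, tw A h (f i) = C c * f i := by
    intro i h hfi
    obtain ⟨q, hq⟩ := hdvd i h hfi
    obtain ⟨p, hp⟩ := hdvd i (fun j => (h j)⁻¹) hfi
    have hinv : f i = tw A h (f i) * tw A h p := by
      conv_lhs => rw [← tw_tw A h (f i), hp, map_mul]
    have hqu : IsUnit q := by
      apply IsUnit.of_mul_eq_one (a := q) (tw A h p)
      apply mul_left_cancel₀ hfi
      rw [mul_one, ← mul_assoc, ← hq]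
      exact hinv.symm
    obtain ⟨c, rfl⟩ := isUnit_eq_C q hqu
    exact ⟨c, by rw [hq]; ring⟩
  have hne : ∃ i₀, f i₀ ≠ 0 := by
    by_contra hc
    push_neg at hc
    exact (hgcd 0 (fun i => by simp [hc i])).ne_zero rfl
  obtain ⟨i₀, hi₀⟩ := hne
  obtain ⟨d₀, hd₀⟩ : ∃ d, d ∈ (f i₀).support := by
    rcases Finset.eq_empty_or_nonempty (f i₀).support with he | ⟨d, hd⟩
    · exact absurd (support_eq_empty.mp he) hi₀
    · exact ⟨d, hd⟩
  refine ⟨wt A d₀, ?_⟩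
  intro i h x
  rw [← eval_tw]
  by_cases hfi : f i = 0
  · rw [hfi]; simp
  · obtain ⟨ci, hci⟩ := hconst i h hfi
    obtain ⟨c₀, hc₀⟩ := hconst i₀ h hi₀
    have hcc : ci = c₀ := by
      have hk := key i i₀ h
      rw [hci, hc₀] at hk
      have heq : C ci * (f i * f i₀) = C c₀ * (f i * f i₀) := by
        calc C ci * (f i * f i₀) = C ci * f i * f i₀ := by ring
          _ = C c₀ * f i₀ * f i := hk
          _ = C c₀ * (f i * f i₀) := by ring
      have h2 := mul_right_cancel₀ (mul_ne_zero hfi hi₀) heq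
      exact C_injective _ _ h2
    have hc0val : c₀ = torusChar (wt A d₀) h := by
      have hco := congrArg (coeff d₀) hc₀
      rw [coeff_tw, coeff_C_mul] at hco
      exact (mul_right_cancel₀ (mem_support_iff.mp hd₀) hco).symm
    rw [hci, eval_mul, eval_C, hcc, hc0val]
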